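/- Let f : O → O be a real-linear map on the octonions satisfying f(px) = p̄ f(x) for all p, x ∈ O. Then f = 0. -/

import Mathlib

noncomputable section

open scoped Quaternion

/-- The octonions, built from pairs of quaternions via the Cayley–Dickson construction. -/
def Octonion : Type := ℍ[ℝ] × ℍ[ℝ]

namespace Octonion

def mk' (a b : ℍ[ℝ]) : Octonion := Prod.mk a b
def q1 (x : Octonion) : ℍ[ℝ] := Prod.fst x
def q2 (x : Octonion) : ℍ[ℝ] := Prod.snd x

instance : AddCommGroup Octonion := inferInstanceAs (AddCommGroup (ℍ[ℝ] × ℍ[ℝ]))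
instance : Module ℝ Octonion := inferInstanceAs (Module ℝ (ℍ[ℝ] × ℍ[ℝ]))
instance : One Octonion := ⟨mk' 1 0⟩
instance : Mul Octonion :=
  ⟨fun x y => mk' (q1 x * q1 y - star (q2 y) * q2 x) (q2 y * q1 x + q2 x * star (q1 y))⟩

/-- Octonion conjugation. -/
def conj (x : Octonion) : Octonion := mk' (star (q1 x)) (-(q2 x))

/-- The real part of an octonion. -/
def re (x : Octonion) : ℝ := (q1 x).re

/-- The standard basis `e 0 = 1, e 1, …, e 7` of the octonions. -/
def e : Fin 8 → Octonion :=
  ![mk' 1 0, mk' ⟨0,1,0,0⟩ 0, mk' ⟨0,0,1,0⟩ 0, mk' ⟨0,0,0,1⟩ 0,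
    mk' 0 1, mk' 0 ⟨0,1,0,0⟩, mk' 0 ⟨0,0,1,0⟩, mk' 0 ⟨0,0,0,1⟩]

/-- The coordinates of an octonion with respect to the standard basis. -/
def coord (x : Octonion) : Fin 8 → ℝ :=
  ![(q1 x).re, (q1 x).imI, (q1 x).imJ, (q1 x).imK,
    (q2 x).re, (q2 x).imI, (q2 x).imJ, (q2 x).imK]

end Octonion

open Octonion

lemma mul_def (x y : Octonion) :
    x * y = mk' (q1 x * q1 y - star (q2 y) * q2 x) (q2 y * q1 x + q2 x * star (q1 y)) := rfl
lemma one_def : (1 : Octonion) = mk' 1 0 := rfl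
lemma zero_def : (0 : Octonion) = mk' 0 0 := rfl
lemma q1_mk (a b : ℍ[ℝ]) : q1 (mk' a b) = a := rfl
lemma q2_mk (a b : ℍ[ℝ]) : q2 (mk' a b) = b := rfl
lemma conj_def (x : Octonion) : conj x = mk' (star (q1 x)) (-(q2 x)) := rfl
lemma oct_ext_iff {x y : Octonion} : x = y ↔ q1 x = q1 y ∧ q2 x = q2 y := Prod.ext_iff


open Octonion in
/-- An `ℝ`-linear map `f : 𝕆 → 𝕆` with `f (p x) = p̄ f(x)` for all `p, x` is zero. -/
theorem octonion_conj_equivariant_map_eq_zero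
    (f : Octonion →ₗ[ℝ] Octonion)
    (h : ∀ p x : Octonion, f (p * x) = conj p * f x) :
    f = 0 := by
  have hone : ∀ y : Octonion, y * 1 = y := by
    intro y
    rw [one_def, mul_def, q1_mk, q2_mk, oct_ext_iff, q1_mk, q2_mk]
    constructor <;> simp [q1_mk, q2_mk]
  have hf : ∀ y : Octonion, f y = conj y * f 1 := by
    intro y
    have := h y 1
    rwa [hone] at this
  have key : ∀ p x : Octonion, conj (p * x) * f 1 = conj p * (conj x * f 1) := by
    intro p x
    rw [← hf, ← hf, h]
  have hc : f 1 = 0 := by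
    have k1 := key (mk' ⟨0,1,0,0⟩ 0) (mk' ⟨0,0,1,0⟩ 0)
    have k2 := key (mk' ⟨0,1,0,0⟩ 0) (mk' 0 1)
    have k3 := key (mk' ⟨0,1,0,0⟩ 0) (mk' 0 ⟨0,0,1,0⟩)
    simp only [mul_def, conj_def, q1_mk, q2_mk, oct_ext_iff, Quaternion.ext_iff,
      Quaternion.re_mul, Quaternion.imI_mul, Quaternion.imJ_mul, Quaternion.imK_mul,
      Quaternion.re_star, Quaternion.imI_star, Quaternion.imJ_star, Quaternion.imK_star,
      Quaternion.re_neg, Quaternion.imI_neg, Quaternion.imJ_neg, Quaternion.imK_neg,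
      Quaternion.re_sub, Quaternion.imI_sub, Quaternion.imJ_sub, Quaternion.imK_sub,
      Quaternion.re_add, Quaternion.imI_add, Quaternion.imJ_add, Quaternion.imK_add,
      Quaternion.re_zero, Quaternion.imI_zero, Quaternion.imJ_zero, Quaternion.imK_zero,
      Quaternion.re_one, Quaternion.imI_one, Quaternion.imJ_one, Quaternion.imK_one,
      zero_def] at k1 k2 k3 ⊢
    simp only [Octonion.q1, Octonion.q2, Octonion.mk', Quaternion.re_zero,
      Quaternion.imI_zero, Quaternion.imJ_zero, Quaternion.imK_zero] at k1 k2 k3 ⊢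
    ring_nf at k1 k2 k3
    obtain ⟨⟨a1, a2, a3, a4⟩, b1, b2, b3, b4⟩ := k1
    obtain ⟨⟨c1, c2, c3, c4⟩, d1, d2, d3, d4⟩ := k2
    obtain ⟨⟨e1, e2, e3, e4⟩, g1, g2, g3, g4⟩ := k3
    refine ⟨⟨?_, ?_, ?_, ?_⟩, ?_, ?_, ?_, ?_⟩ <;> linarith
  have : ∀ y : Octonion, f y = 0 := by
    intro y
    rw [hf, hc, zero_def, mul_def, q1_mk, q2_mk, oct_ext_iff, q1_mk, q2_mk]
    constructor <;> simp [q1_mk, q2_mk]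
  exact LinearMap.ext this
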